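/- Let G be a K-edge-connected finite simple graph and let T̃ be a spanning tree of G with congestion at most K. Let Z_1, ..., Z_d be pairwise disjoint nonempty vertex sets whose union is V(G), such that each ∂Z_i is a K-cut of G, and such that for every K-cut ∂Y of G there exists an index j with Y ⊆ Z_j or V(G)∖Y ⊆ Z_j. Then there exists an index j and a vertex w ∈ Z_j such that every edge of T̃ that belongs to some ∂Z_i is incident to w; that is, T̃ ∩ (∂Z_1 ∪ ... ∪ ∂Z_d) ⊆ E_w. -/

import Mathlib

open SimpleGraph

variable {V : Type*}

/-- The cut `∂X`: the set of edges of `G` with exactly one endpoint in `X`. -/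
def cutEdges (G : SimpleGraph V) (X : Set V) : Set (Sym2 V) :=
  {e | e ∈ G.edgeSet ∧ ∃ u v, e = s(u, v) ∧ u ∈ X ∧ v ∉ X}

/-- `G` is `K`-edge-connected: at least two vertices, connected, and every cut has
at least `K` edges. -/
def KEdgeConnected (G : SimpleGraph V) (K : ℕ) : Prop :=
  Nontrivial V ∧ G.Connected ∧
    ∀ X : Set V, X.Nonempty → X ≠ Set.univ → K ≤ (cutEdges G X).ncard

/-- `∂X` is a `K`-cut. -/
def IsKCut (G : SimpleGraph V) (K : ℕ) (X : Set V) : Prop :=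
  X.Nonempty ∧ X ≠ Set.univ ∧ (cutEdges G X).ncard = K

/-- The cuts `∂X` and `∂Y` cross. -/
def Crossing (X Y : Set V) : Prop :=
  (X ∩ Y).Nonempty ∧ (X ∩ Yᶜ).Nonempty ∧ (Xᶜ ∩ Y).Nonempty ∧ (Xᶜ ∩ Yᶜ).Nonempty

/-- The set of vertices reachable from `u` in `T` after deleting the edge `e`;
for a spanning tree `T` and an edge `e` of `T` with endpoint `u`, this is the shore
of the cut induced by `e` containing `u`. -/
def treeSide (T : SimpleGraph V) (u : V) (e : Sym2 V) : Set V :=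
  {x | (T.deleteEdges {e}).Reachable u x}

/-- The congestion of the edge `(u,v)` of a spanning tree `T` of `G`. -/
noncomputable def edgeCong (G T : SimpleGraph V) (u v : V) : ℕ :=
  (cutEdges G (treeSide T u s(u, v))).ncard

/-- The spanning tree `T` of `G` has congestion at most `K`. -/
def CongAtMost (G T : SimpleGraph V) (K : ℕ) : Prop :=
  ∀ u v, T.Adj u v → edgeCong G T u v ≤ K

/-- The congestion of a spanning tree `T` of `G`. -/
noncomputable def treeCongestion (G T : SimpleGraph V) : ℕ :=
  sSup {n | ∃ u v, T.Adj u v ∧ n = edgeCong G T u v}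

/-- The spanning-tree congestion of `G`. -/
noncomputable def stc (G : SimpleGraph V) : ℕ :=
  sInf {n | ∃ T : SimpleGraph V, T ≤ G ∧ T.IsTree ∧ treeCongestion G T = n}

/-- `T_out(w,e)`: the vertex set of the component of the tree `H − e` not containing `w`
(the vertices of `H` that are no longer reachable from `w` after deleting `e`). -/
def treeOut (G : SimpleGraph V) (H : G.Subgraph) (w : V) (e : Sym2 V) : Set V :=
  {x ∈ H.verts | ¬ (H.deleteEdges {e}).spanningCoe.Reachable w x}

/-- The rooted tree `(H, w)` is safe (with parameter `K`). -/
def SafeTree (G : SimpleGraph V) (K : ℕ) (H : G.Subgraph) (w : V) : Prop :=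
  ∀ e ∈ H.edgeSet, (cutEdges G (treeOut G H w e)).ncard = K

/-- `V(∂X)`: the set of endpoints of edges of the cut `∂X`. -/
def cutVerts (G : SimpleGraph V) (X : Set V) : Set V :=
  {v | ∃ e ∈ cutEdges G X, v ∈ e}

/-- `w` is a hub for `Z`: `w ∈ V(∂Z)` and there is a spanning tree `H` of the subgraph
of `G` induced by `Z ∪ {w}` such that `(H, w)` is a safe tree. -/
def IsHub (G : SimpleGraph V) (K : ℕ) (Z : Set V) (w : V) : Prop :=
  w ∈ cutVerts G Z ∧
    ∃ H : G.Subgraph, H.verts = Z ∪ {w} ∧ H.coe.IsTree ∧ SafeTree G K H w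

/-- `H̃(Z)`: the set of all hubs for `Z`. -/
def hubSet (G : SimpleGraph V) (K : ℕ) (Z : Set V) : Set V :=
  {w | IsHub G K Z w}

/-- `N(S)`: the set of vertices adjacent in `G` to some vertex of `S`. -/
def nbrSet (G : SimpleGraph V) (S : Set V) : Set V :=
  {v | ∃ u ∈ S, G.Adj u v}

/-- Edges of `∂X` with both endpoints in `S`. -/
def cutRestrict (G : SimpleGraph V) (X S : Set V) : Set (Sym2 V) :=
  {e ∈ cutEdges G X | ∀ v ∈ e, v ∈ S}

section AuxLemmas

variable {T : SimpleGraph V}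

private lemma reach_side_aux {u v : V} : ∀ {x y : V}, T.Walk x y → y = u →
    (T.deleteEdges {s(u, v)}).Reachable u x ∨ (T.deleteEdges {s(u, v)}).Reachable v x := by
  intro x y p
  induction p with
  | nil => rintro rfl; exact Or.inl (Reachable.refl _)
  | cons h q ih =>
    rename_i a b c
    intro hc
    by_cases he : s(a, b) = s(u, v)
    · rcases Sym2.eq_iff.mp he with ⟨rfl, rfl⟩ | ⟨rfl, rfl⟩
      · exact Or.inl (Reachable.refl _)
      · exact Or.inr (Reachable.refl _)
    · have hadj : (T.deleteEdges {s(u, v)}).Adj a b := by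
        rw [deleteEdges_adj]; exact ⟨h, by simpa using he⟩
      exact (ih hc).imp (fun r => r.trans hadj.symm.reachable)
        (fun r => r.trans hadj.symm.reachable)

lemma reach_side (hT : T.Connected) (u v x : V) :
    (T.deleteEdges {s(u, v)}).Reachable u x ∨ (T.deleteEdges {s(u, v)}).Reachable v x := by
  obtain ⟨p⟩ := hT.preconnected x u
  exact reach_side_aux p rfl

lemma side_not_both (hT : T.IsTree) {u v x : V} (huv : T.Adj u v)
    (h1 : (T.deleteEdges {s(u, v)}).Reachable u x)
    (h2 : (T.deleteEdges {s(u, v)}).Reachable v x) : False := by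
  have hb := (isAcyclic_iff_forall_adj_isBridge.mp hT.IsAcyclic) huv
  exact (isBridge_iff.mp hb) (h1.trans h2.symm)

lemma side_compl (hT : T.IsTree) {u v : V} (huv : T.Adj u v) :
    treeSide T v s(u, v) = (treeSide T u s(u, v))ᶜ := by
  ext x
  constructor
  · intro h2 h1; exact side_not_both hT huv h1 h2
  · intro h1; exact (reach_side hT.isConnected u v x).resolve_left h1

lemma side_kcut [Fintype V] {G : SimpleGraph V} {K : ℕ} (hG : KEdgeConnected G K)
    (hTtree : T.IsTree) (hTcong : CongAtMost G T K) {u v : V} (huv : T.Adj u v) :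
    IsKCut G K (treeSide T u s(u, v)) := by
  have hune : (treeSide T u s(u, v)).Nonempty := ⟨u, Reachable.refl _⟩
  have huniv : treeSide T u s(u, v) ≠ Set.univ := by
    intro h
    have : v ∈ treeSide T u s(u, v) := h ▸ Set.mem_univ v
    exact side_not_both hTtree huv this (Reachable.refl _)
  exact ⟨hune, huniv, le_antisymm (hTcong u v huv) (hG.2.2 _ hune huniv)⟩

lemma side_dichotomy [Fintype V] {G : SimpleGraph V} {K : ℕ} {d : ℕ} {Z : Fin d → Set V}
    (hG : KEdgeConnected G K) (hTtree : T.IsTree) (hTcong : CongAtMost G T K)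
    (hlam : ∀ Y : Set V, IsKCut G K Y → ∃ j, Y ⊆ Z j ∨ Yᶜ ⊆ Z j)
    {u v : V} (huv : T.Adj u v) :
    ∃ j, treeSide T u s(u, v) ⊆ Z j ∨ treeSide T v s(u, v) ⊆ Z j := by
  obtain ⟨j, hj⟩ := hlam _ (side_kcut hG hTtree hTcong huv)
  refine ⟨j, hj.imp id fun h => ?_⟩
  rw [side_compl hTtree huv]
  exact h

end AuxLemmas

/-- (Lemma: basic `K`-cuts associated with a Type-0 node.) If
`Z_1, …, Z_d` partition `V` into `K`-cuts such that every `K`-cut has a shore inside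
some `Z_j`, then there is an index `j` and a vertex `w ∈ Z_j` such that every edge of
a congestion-`K` spanning tree `T̃` crossing some `∂Z_i` is incident to `w`. -/
theorem tree_edges_in_basic_cuts_incident_type0 {V : Type*} [Fintype V] (K : ℕ)
    (G : SimpleGraph V) (hG : KEdgeConnected G K)
    (T : SimpleGraph V) (hTle : T ≤ G) (hTtree : T.IsTree) (hTcong : CongAtMost G T K)
    (d : ℕ) (Z : Fin d → Set V)
    (hdisj : ∀ i j, i ≠ j → Disjoint (Z i) (Z j))
    (hne : ∀ i, (Z i).Nonempty)
    (hunion : (⋃ i, Z i) = Set.univ)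
    (hcuts : ∀ i, IsKCut G K (Z i))
    (hlam : ∀ Y : Set V, IsKCut G K Y → ∃ j, Y ⊆ Z j ∨ Yᶜ ⊆ Z j) :
    ∃ j : Fin d, ∃ w ∈ Z j,
      ∀ u v : V, T.Adj u v → s(u, v) ∈ ⋃ i, cutEdges G (Z i) → u = w ∨ v = w := by
  classical
  obtain ⟨hnt, hconn, hmin⟩ := hG
  have hG' : KEdgeConnected G K := ⟨hnt, hconn, hmin⟩
  have hTconn := hTtree.isConnected
  -- T has an edge
  obtain ⟨x₁, y₁, hxy⟩ : ∃ x y : V, T.Adj x y := by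
    obtain ⟨x, y, hxyne⟩ := hnt
    obtain ⟨p⟩ := hTconn.preconnected x y
    cases p with
    | nil => exact absurd rfl hxyne
    | cons h q => exact ⟨_, _, h⟩
  -- the collection of "small sides" contained in a single part
  set P : Set (Set V) :=
    {C | ∃ a b : V, T.Adj a b ∧ C = treeSide T b s(a, b) ∧ ∃ j, C ⊆ Z j} with hPdef
  have hPne : P.Nonempty := by
    obtain ⟨j, hj⟩ := side_dichotomy hG' hTtree hTcong hlam hxy
    rcases hj with h | h
    · refine ⟨treeSide T x₁ s(x₁, y₁), y₁, x₁, hxy.symm, ?_, j, h⟩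
      rw [Sym2.eq_swap]
    · exact ⟨treeSide T y₁ s(x₁, y₁), x₁, y₁, hxy, rfl, j, h⟩
  obtain ⟨C, hCP, hCmax⟩ :=
    Set.Finite.exists_maximalFor Set.ncard P (Set.toFinite P) hPne
  obtain ⟨u₀, v₀, h₀, hCeq, j₀, hCsub⟩ := hCP
  obtain ⟨j₁, hj₁⟩ : ∃ j, u₀ ∈ Z j :=
    Set.mem_iUnion.mp (hunion ▸ Set.mem_univ u₀)
  refine ⟨j₁, u₀, hj₁, ?_⟩
  intro u v huv hcut
  by_contra hcon
  push_neg at hcon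
  obtain ⟨hu, hv⟩ := hcon
  -- u and v lie in no common part
  have hnc : ∀ u' v' : V, (∀ j, u' ∈ Z j → v' ∈ Z j → False) →
      ∀ j, v' ∈ Z j → u' ∈ Z j → False := fun u' v' h j a b => h j b a
  have hncuv : ∀ j, u ∈ Z j → v ∈ Z j → False := by
    obtain ⟨i, hi⟩ := by
      simpa only [Set.mem_iUnion] using hcut
    obtain ⟨hedge, a, b, hab, haZ, hbZ⟩ := hi
    intro j huj hvj
    rcases Sym2.eq_iff.mp hab with ⟨rfl, rfl⟩ | ⟨rfl, rfl⟩
    · rcases eq_or_ne i j with rfl | hij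
      · exact hbZ hvj
      · exact Set.disjoint_left.mp (hdisj i j hij) haZ huj
    · rcases eq_or_ne i j with rfl | hij
      · exact hbZ huj
      · exact Set.disjoint_left.mp (hdisj i j hij) haZ hvj
  have hv₀C : v₀ ∈ C := by rw [hCeq]; exact Reachable.refl _
  have hu₀C : u₀ ∉ C := by
    rw [hCeq]
    exact fun h => side_not_both hTtree h₀ (Reachable.refl _) h
  -- the key symmetric argument
  have key : ∀ u' v' : V, T.Adj u' v' → u' ≠ u₀ → v' ≠ u₀ →
      (∀ j, u' ∈ Z j → v' ∈ Z j → False) →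
      (T.deleteEdges {s(u', v')}).Reachable u' u₀ → False := by
    intro u v huv hu hv hncuv hw
    have he₀ : s(u, v) ≠ s(u₀, v₀) := by
      intro h
      rcases Sym2.eq_iff.mp h with ⟨h1, _⟩ | ⟨_, h2⟩
      · exact hu h1
      · exact hv h2
    -- u ∉ C and v ∉ C
    have hvuC : v ∈ C → u ∈ C := by
      intro hvC
      have hadj : (T.deleteEdges {s(u₀, v₀)}).Adj v u := by
        rw [deleteEdges_adj]
        refine ⟨huv.symm, ?_⟩
        simpa [Sym2.eq_swap] using he₀
      rw [hCeq] at hvC ⊢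
      exact hvC.trans hadj.reachable
    have huvC : u ∈ C → v ∈ C := by
      intro huC
      have hadj : (T.deleteEdges {s(u₀, v₀)}).Adj u v := by
        rw [deleteEdges_adj]
        exact ⟨huv, by simpa using he₀⟩
      rw [hCeq] at huC ⊢
      exact huC.trans hadj.reachable
    have huC : u ∉ C := fun h => hncuv j₀ (hCsub h) (hCsub (huvC h))
    have hvC : v ∉ C := fun h => hncuv j₀ (hCsub (hvuC h)) (hCsub h)
    -- the first edge of the path from u to u₀ in T − e
    obtain ⟨p0⟩ := hw
    obtain ⟨q, hq⟩ := p0.toPath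
    cases q with
    | nil => exact hu rfl
    | cons hadj qtail =>
      rename_i w'
      rw [SimpleGraph.Walk.cons_isPath_iff] at hq
      obtain ⟨hq1, hq2⟩ := hq
      have huw' : T.Adj u w' := ((deleteEdges_adj).mp hadj).1
      have hneq : s(u, w') ≠ s(u, v) := by
        have := ((deleteEdges_adj).mp hadj).2
        simpa using this
      obtain ⟨k, hk⟩ := side_dichotomy hG' hTtree hTcong hlam huw'
      rcases hk with hk | hk
      · -- the u-side of the edge (u, w') contains both u and v
        have hvmem : v ∈ treeSide T u s(u, w') := by
          have hadj' : (T.deleteEdges {s(u, w')}).Adj u v := by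
            rw [deleteEdges_adj]
            exact ⟨huv, by simpa using hneq.symm⟩
          exact hadj'.reachable
        exact hncuv k (hk (Reachable.refl _)) (hk hvmem)
      · -- the w'-side is a member of P strictly larger than C
        have hSP : treeSide T w' s(u, w') ∈ P := ⟨u, w', huw', rfl, k, hk⟩
        have hq3 : ∀ e ∈ qtail.edges, e ∈ (T.deleteEdges {s(u, w')}).edgeSet := by
          intro e he
          have heT : e ∈ (T.deleteEdges {s(u, v)}).edgeSet := qtail.edges_subset_edgeSet he
          rw [edgeSet_deleteEdges] at heT ⊢
          refine ⟨heT.1, ?_⟩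
          simp only [Set.mem_singleton_iff]
          intro heq
          exact hq2 (qtail.fst_mem_support_of_mem_edges (heq ▸ he))
        have hu₀S : u₀ ∈ treeSide T w' s(u, w') := ⟨qtail.transfer _ hq3⟩
        have hfne : s(u, w') ≠ s(u₀, v₀) := by
          intro h
          rcases Sym2.eq_iff.mp h with ⟨h1, _⟩ | ⟨h1, _⟩
          · exact hu h1
          · exact huC (h1 ▸ hv₀C)
        have hCS : C ⊆ treeSide T w' s(u, w') := by
          intro c hc
          rw [hCeq] at hc
          obtain ⟨r0⟩ := hc
          have hr : ∀ e ∈ r0.edges, e ∈ (T.deleteEdges {s(u, w')}).edgeSet := by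
            intro e he
            have heT : e ∈ (T.deleteEdges {s(u₀, v₀)}).edgeSet := r0.edges_subset_edgeSet he
            rw [edgeSet_deleteEdges] at heT ⊢
            refine ⟨heT.1, ?_⟩
            simp only [Set.mem_singleton_iff]
            intro heq
            have husup : u ∈ r0.support := r0.fst_mem_support_of_mem_edges (heq ▸ he)
            have : u ∈ C := by rw [hCeq]; exact ⟨r0.takeUntil u husup⟩
            exact huC this
          have hadj₀ : (T.deleteEdges {s(u, w')}).Adj u₀ v₀ := by
            rw [deleteEdges_adj]
            exact ⟨h₀, by simpa using hfne.symm⟩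
          exact (hu₀S.trans hadj₀.reachable).trans ⟨r0.transfer _ hr⟩
        have hss : C ⊂ treeSide T w' s(u, w') := ⟨hCS, fun h => hu₀C (h hu₀S)⟩
        have hlt := Set.ncard_lt_ncard hss (Set.toFinite _)
        exact absurd (hCmax hSP hlt.le) (not_le.mpr hlt)
  rcases reach_side hTconn u v u₀ with h | h
  · exact key u v huv hu hv hncuv h
  · refine key v u huv.symm hv hu (hnc u v hncuv) ?_
    rw [Sym2.eq_swap]
    exact h
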